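/- Let μ be a finite Borel measure on ℝ^d, let f_n : ℝ^d → ℝ be a sequence of functions converging pointwise to f : ℝ^d → ℝ, and assume inf_n f_n(0) > −∞. For a function g : ℝ^d → ℝ define F(g)(v) := sup_{x∈ℝ^d} (⟨v,x⟩ + g(x)), valued in (−∞, ∞]. Then liminf_{n→∞} ∫ F(f_n)(v) dμ(v) ≥ ∫ F(f)(v) dμ(v), where the integrals are understood in the extended reals (the integrands are bounded below by inf_n f_n(0)). -/

import Mathlib

open Filter MeasureTheory

/-- The canonical map `EReal → ℝ≥0∞` sending `⊤ ↦ ⊤` and `x ↦ max x 0` otherwise. -/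
noncomputable def erealToENNReal (x : EReal) : ENNReal :=
  if x = ⊤ then ⊤ else ENNReal.ofReal x.toReal

/-- The integral of an `EReal`-valued function, as an extended real number: the difference of
the lower integrals of the positive and negative parts. -/
noncomputable def erealIntegral {X : Type*} [MeasurableSpace X]
    (μ : MeasureTheory.Measure X) (g : X → EReal) : EReal :=
  ((∫⁻ x, erealToENNReal (g x) ∂μ : ENNReal) : EReal)
    - ((∫⁻ x, erealToENNReal (-(g x)) ∂μ : ENNReal) : EReal)

open scoped ENNReal

lemma erealToENNReal_coe (r : ℝ) : erealToENNReal (r : EReal) = ENNReal.ofReal r := by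
  simp [erealToENNReal]

lemma erealToENNReal_top : erealToENNReal ⊤ = ⊤ := by simp [erealToENNReal]

lemma erealToENNReal_bot : erealToENNReal ⊥ = 0 := by simp [erealToENNReal]

lemma erealToENNReal_mono : Monotone erealToENNReal := by
  intro x y hxy
  unfold erealToENNReal
  by_cases hy : y = ⊤
  · simp [hy]
  · have hx : x ≠ ⊤ := fun h => hy (top_le_iff.mp (h ▸ hxy))
    rw [if_neg hx, if_neg hy]
    by_cases hxb : x = ⊥
    · simp [hxb]
    · exact ENNReal.ofReal_le_ofReal (EReal.toReal_le_toReal hxy hxb hy)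

lemma measurable_erealToENNReal : Measurable erealToENNReal := by
  unfold erealToENNReal
  exact Measurable.ite (measurableSet_eq) measurable_const
    (ENNReal.measurable_ofReal.comp measurable_ereal_toReal)

lemma ennreal_coe_ereal_eq (x : ℝ≥0∞) (hx : x ≠ ⊤) :
    (x : EReal) = ((x.toReal : ℝ) : EReal) := by
  conv_lhs => rw [← ENNReal.ofReal_toReal hx]
  rw [EReal.coe_ennreal_ofReal, max_eq_left ENNReal.toReal_nonneg]

lemma key_add (c : ℝ) (hc : c ≤ 0) (y : EReal) (hy : (c : EReal) ≤ y) :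
    erealToENNReal (y - (c : EReal)) + erealToENNReal (-y)
      = erealToENNReal y + ENNReal.ofReal (-c) := by
  induction y with
  | bot => simp at hy
  | coe r =>
    have hcr : c ≤ r := by exact_mod_cast hy
    rw [show (r : EReal) - (c : EReal) = ((r - c : ℝ) : EReal) from (EReal.coe_sub r c),
      show (-(r : EReal)) = ((-r : ℝ) : EReal) from (EReal.coe_neg r).symm,
      erealToENNReal_coe, erealToENNReal_coe, erealToENNReal_coe]
    rcases le_total r 0 with hr | hr
    · rw [ENNReal.ofReal_eq_zero.mpr hr, zero_add,
        ← ENNReal.ofReal_add (by linarith) (by linarith)]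
      ring_nf
    · rw [ENNReal.ofReal_eq_zero.mpr (by linarith : -r ≤ 0), add_zero,
        ← ENNReal.ofReal_add hr (by linarith)]
      ring_nf
  | top =>
    rw [EReal.top_sub_coe, show (-(⊤ : EReal)) = ⊥ from rfl,
      erealToENNReal_top, erealToENNReal_bot, add_zero]
    simp

lemma erealToENNReal_le_liminf (s : ℕ → EReal) (x : EReal)
    (h : x ≤ liminf s atTop) :
    erealToENNReal x ≤ liminf (fun n => erealToENNReal (s n)) atTop := by
  rw [le_liminf_iff]
  intro y hy
  obtain ⟨r, hrx, hyr⟩ : ∃ r : ℝ, (r : EReal) < x ∧ y < ENNReal.ofReal r := by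
    induction x with
    | bot => simp [erealToENNReal_bot] at hy
    | coe t =>
      rw [erealToENNReal_coe] at hy
      have hyt : y ≠ ⊤ := fun h' => by simp [h'] at hy
      have h1 : y.toReal < t := (ENNReal.lt_ofReal_iff_toReal_lt hyt).mp hy
      obtain ⟨r, h2, h3⟩ := exists_between h1
      exact ⟨r, by exact_mod_cast h3, (ENNReal.lt_ofReal_iff_toReal_lt hyt).mpr h2⟩
    | top =>
      have hyt : y ≠ ⊤ := by rw [erealToENNReal_top] at hy; exact hy.ne
      refine ⟨y.toReal + 1, EReal.coe_lt_top _,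
        (ENNReal.lt_ofReal_iff_toReal_lt hyt).mpr (by linarith)⟩
  have hlt : (r : EReal) < liminf s atTop := lt_of_lt_of_le hrx h
  filter_upwards [eventually_lt_of_lt_liminf hlt] with n hn
  calc y < ENNReal.ofReal r := hyr
    _ = erealToENNReal (r : EReal) := (erealToENNReal_coe r).symm
    _ ≤ erealToENNReal (s n) := erealToENNReal_mono hn.le

lemma ereal_liminf_sub_const (u : ℕ → EReal) (c : ℝ) :
    liminf u atTop - (c : EReal) ≤ liminf (fun n => u n - (c : EReal)) atTop := by
  rw [le_liminf_iff]
  intro y hy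
  have h1 : y + (c : EReal) < liminf u atTop :=
    (EReal.lt_sub_iff_add_lt (Or.inl (EReal.coe_ne_bot c))
      (Or.inl (EReal.coe_ne_top c))).mp hy
  filter_upwards [eventually_lt_of_lt_liminf h1] with n hn
  exact (EReal.lt_sub_iff_add_lt (Or.inl (EReal.coe_ne_bot c))
      (Or.inl (EReal.coe_ne_top c))).mpr hn

lemma ereal_measurable_sub_const (c : ℝ) : Measurable (fun y : EReal => y - (c : EReal)) := by
  apply EReal.measurable_of_measurable_real
  have : (fun p : ℝ => (p : EReal) - (c : EReal)) = fun p : ℝ => ((p - c : ℝ) : EReal) := by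
    funext p; rw [EReal.coe_sub]
  rw [this]
  exact measurable_coe_real_ereal.comp (measurable_id.sub measurable_const)


lemma erealIntegral_shift {X : Type*} [MeasurableSpace X] (μ : Measure X) [IsFiniteMeasure μ]
    (g : X → EReal) (hg : Measurable g) (c : ℝ) (hc : c ≤ 0) (hgc : ∀ x, (c : EReal) ≤ g x) :
    erealIntegral μ g
      = ((∫⁻ x, erealToENNReal (g x - (c : EReal)) ∂μ : ENNReal) : EReal)
        - ((ENNReal.ofReal (-c) * μ Set.univ : ENNReal) : EReal) := by
  set A := ∫⁻ x, erealToENNReal (g x) ∂μ with hA_def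
  set B := ∫⁻ x, erealToENNReal (-(g x)) ∂μ with hB_def
  set G := ∫⁻ x, erealToENNReal (g x - (c : EReal)) ∂μ with hG_def
  set k := ENNReal.ofReal (-c) * μ Set.univ with hk_def
  have hk : k ≠ ⊤ := ENNReal.mul_ne_top ENNReal.ofReal_ne_top (measure_ne_top μ _)
  have hB : B ≤ k := by
    calc B ≤ ∫⁻ _, ENNReal.ofReal (-c) ∂μ := by
          apply lintegral_mono
          intro x
          calc erealToENNReal (-(g x)) ≤ erealToENNReal (((-c : ℝ)) : EReal) := by
                apply erealToENNReal_mono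
                rw [EReal.coe_neg]
                exact EReal.neg_le_neg_iff.mpr (hgc x)
            _ = ENNReal.ofReal (-c) := erealToENNReal_coe _
      _ = k := by rw [lintegral_const]
  have hBt : B ≠ ⊤ := fun h => hk (top_le_iff.mp (h ▸ hB))
  have hmeasG : Measurable fun x => erealToENNReal (g x - (c : EReal)) :=
    measurable_erealToENNReal.comp ((ereal_measurable_sub_const c).comp hg)
  have hGB : G + B = A + k := by
    calc G + B = ∫⁻ x, (erealToENNReal (g x - (c : EReal)) + erealToENNReal (-(g x))) ∂μ :=
          (lintegral_add_left hmeasG _).symm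
      _ = ∫⁻ x, (erealToENNReal (g x) + ENNReal.ofReal (-c)) ∂μ :=
          lintegral_congr fun x => key_add c hc (g x) (hgc x)
      _ = A + k := by rw [lintegral_add_right _ measurable_const, lintegral_const]
  show (A : EReal) - (B : EReal) = (G : EReal) - (k : EReal)
  rcases eq_or_ne G ⊤ with hG | hG
  · have hAtop : A = ⊤ := by
      by_contra hA
      have hne : A + k ≠ ⊤ := ENNReal.add_ne_top.mpr ⟨hA, hk⟩
      rw [← hGB, hG] at hne
      simp at hne
    rw [hAtop, hG, EReal.coe_ennreal_top, ennreal_coe_ereal_eq B hBt,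
      ennreal_coe_ereal_eq k hk, EReal.top_sub_coe, EReal.top_sub_coe]
  · have hAt : A ≠ ⊤ := by
      intro hA
      have : A + k = ⊤ := by rw [hA]; simp
      rw [← hGB] at this
      exact hG ((ENNReal.add_eq_top.mp this).resolve_right hBt)
    have hreal : G.toReal + B.toReal = A.toReal + k.toReal := by
      have h1 : (G + B).toReal = (A + k).toReal := by rw [hGB]
      rwa [ENNReal.toReal_add hG hBt, ENNReal.toReal_add hAt hk] at h1
    rw [ennreal_coe_ereal_eq A hAt, ennreal_coe_ereal_eq B hBt,
      ennreal_coe_ereal_eq G hG, ennreal_coe_ereal_eq k hk,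
      ← EReal.coe_sub, ← EReal.coe_sub]
    norm_cast
    linarith

/-- Fatou-type step in Lemma 3.2 of the paper: for a finite Borel measure
`μ` on `ℝ^d` and functions `f_n → f` pointwise with `inf_n f_n(0) > −∞`, setting
`F(g)(v) := sup_x (⟨v,x⟩ + g(x))`, one has
`liminf_n ∫ F(f_n) dμ ≥ ∫ F(f) dμ` in the extended reals. -/
theorem stmt_4 (d : ℕ) (hd : 1 ≤ d) (μ : Measure (EuclideanSpace ℝ (Fin d)))
    [IsFiniteMeasure μ]
    (f : ℕ → EuclideanSpace ℝ (Fin d) → ℝ) (flim : EuclideanSpace ℝ (Fin d) → ℝ)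
    (hconv : ∀ x, Filter.Tendsto (fun n => f n x) Filter.atTop (nhds (flim x)))
    (hbdd : BddBelow (Set.range fun n => f n 0)) :
    erealIntegral μ (fun v => ⨆ x : EuclideanSpace ℝ (Fin d),
        (((inner ℝ v x : ℝ) + flim x : ℝ) : EReal))
      ≤ Filter.liminf
          (fun n => erealIntegral μ (fun v => ⨆ x : EuclideanSpace ℝ (Fin d),
            (((inner ℝ v x : ℝ) + f n x : ℝ) : EReal)))
          Filter.atTop := by
  -- the sup functional
  set S : (EuclideanSpace ℝ (Fin d) → ℝ) → EuclideanSpace ℝ (Fin d) → EReal :=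
    fun h v => ⨆ x : EuclideanSpace ℝ (Fin d), (((inner ℝ v x : ℝ) + h x : ℝ) : EReal) with hS_def
  -- the lower bound
  obtain ⟨c₀, hc₀⟩ := hbdd
  set c := min c₀ 0 with hc_def
  have hc : c ≤ 0 := min_le_right _ _
  have hcf : ∀ n, c ≤ f n 0 := fun n => (min_le_left _ _).trans (hc₀ ⟨n, rfl⟩)
  have hcl : c ≤ flim 0 := ge_of_tendsto (hconv 0) (Eventually.of_forall hcf)
  -- lower bounds for the sups
  have hlow : ∀ (h : EuclideanSpace ℝ (Fin d) → ℝ), c ≤ h 0 → ∀ v : EuclideanSpace ℝ (Fin d), (c : EReal) ≤ S h v := by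
    intro h h0 v
    calc (c : EReal) ≤ (((inner ℝ v (0 : EuclideanSpace ℝ (Fin d)) : ℝ) + h 0 : ℝ) : EReal) := by
          rw [EReal.coe_le_coe_iff, inner_zero_right, zero_add]; exact h0
      _ ≤ S h v := le_iSup (fun x : EuclideanSpace ℝ (Fin d) => (((inner ℝ v x : ℝ) + h x : ℝ) : EReal)) (0 : EuclideanSpace ℝ (Fin d))
  -- measurability of the sups
  have hmeas : ∀ (h : EuclideanSpace ℝ (Fin d) → ℝ), Measurable (S h) := by
    intro h
    apply LowerSemicontinuous.measurable
    apply lowerSemicontinuous_iSup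
    intro x
    apply Continuous.lowerSemicontinuous
    exact continuous_coe_real_ereal.comp
      ((continuous_id.inner continuous_const).add continuous_const)
  -- pointwise liminf bound
  have hpt : ∀ v : EuclideanSpace ℝ (Fin d), S flim v ≤ liminf (fun n => S (f n) v) atTop := by
    intro v
    apply iSup_le
    intro x
    have ht : Tendsto (fun n => (((inner ℝ v x : ℝ) + f n x : ℝ) : EReal)) atTop
        (nhds (((inner ℝ v x : ℝ) + flim x : ℝ) : EReal)) :=
      (continuous_coe_real_ereal.tendsto _).comp ((hconv x).const_add _)
    rw [← ht.liminf_eq]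
    exact liminf_le_liminf (Eventually.of_forall fun n =>
      le_iSup (fun x : EuclideanSpace ℝ (Fin d) => (((inner ℝ v x : ℝ) + f n x : ℝ) : EReal)) x)
  -- rewrite both sides via the shift lemma
  set G : ℕ → ℝ≥0∞ := fun n => ∫⁻ v, erealToENNReal (S (f n) v - (c : EReal)) ∂μ with hG_def
  set Gl : ℝ≥0∞ := ∫⁻ v, erealToENNReal (S flim v - (c : EReal)) ∂μ with hGl_def
  set k : ℝ≥0∞ := ENNReal.ofReal (-c) * μ Set.univ with hk_def
  have hk : k ≠ ⊤ := ENNReal.mul_ne_top ENNReal.ofReal_ne_top (measure_ne_top μ _)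
  have hrwl : erealIntegral μ (S flim) = (Gl : EReal) - (k : EReal) :=
    erealIntegral_shift μ (S flim) (hmeas flim) c hc (hlow flim hcl)
  have hrwn : (fun n => erealIntegral μ (S (f n)))
      = fun n => ((G n : EReal) - (k : EReal)) := by
    funext n
    exact erealIntegral_shift μ (S (f n)) (hmeas (f n)) c hc (hlow (f n) (hcf n))
  show erealIntegral μ (S flim) ≤ liminf (fun n => erealIntegral μ (S (f n))) atTop
  rw [hrwl, hrwn]
  -- Fatou in ℝ≥0∞
  have hFatou : Gl ≤ liminf G atTop := by
    calc Gl ≤ ∫⁻ v, liminf (fun n => erealToENNReal (S (f n) v - (c : EReal))) atTop ∂μ := by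
          apply lintegral_mono
          intro v
          apply erealToENNReal_le_liminf
          calc S flim v - (c : EReal)
              ≤ liminf (fun n => S (f n) v) atTop - (c : EReal) :=
                EReal.sub_le_sub (hpt v) le_rfl
            _ ≤ liminf (fun n => S (f n) v - (c : EReal)) atTop :=
                ereal_liminf_sub_const _ c
      _ ≤ liminf G atTop :=
          lintegral_liminf_le fun n =>
            measurable_erealToENNReal.comp
              ((ereal_measurable_sub_const c).comp (hmeas (f n)))
  -- transfer to EReal
  have hco : ((liminf G atTop : ℝ≥0∞) : EReal)
      = liminf (fun n => ((G n : ℝ≥0∞) : EReal)) atTop := by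
    exact Monotone.map_liminf_of_continuousAt
      (fun _ _ h => EReal.coe_ennreal_le_coe_ennreal_iff.mpr h) G
      (continuous_coe_ennreal_ereal.continuousAt)
  rw [ennreal_coe_ereal_eq k hk]
  calc (Gl : EReal) - ((k.toReal : ℝ) : EReal)
      ≤ ((liminf G atTop : ℝ≥0∞) : EReal) - ((k.toReal : ℝ) : EReal) :=
        EReal.sub_le_sub (EReal.coe_ennreal_le_coe_ennreal_iff.mpr hFatou) le_rfl
    _ = liminf (fun n => ((G n : ℝ≥0∞) : EReal)) atTop - ((k.toReal : ℝ) : EReal) := by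
        rw [hco]
    _ ≤ liminf (fun n => ((G n : ℝ≥0∞) : EReal) - ((k.toReal : ℝ) : EReal)) atTop :=
        ereal_liminf_sub_const _ _
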